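/- For every base SL-FL formula α, store s, and heaplet h: if S = Supp(α, s, h) ≠ ⊥, then Supp(α, s, h↾S) = S. -/

import Mathlib

/-!
# Base SL-FL (determined-heaplet separation logic)

Locations `Loc` with a distinguished `nil`, field names `F`, variables `Var`.
A heaplet is a domain `dom ⊆ Loc \ {nil}` together with, for each field, a function
defined on the domain (extended by `nil` outside the domain, so that heaplets with the
same domain and the same field values on the domain are equal).
-/

namespace SLFL

open scoped Classical

/-- A heaplet: a domain of locations (not containing `nil`) together with a value for
each field at each location of the domain.  Outside the domain the maps are required to
take the junk value `nil`, so that heaplets are determined by their domain and their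
field values on the domain. -/
structure Heaplet (Loc F : Type) (nil : Loc) where
  dom : Set Loc
  map : F → Loc → Loc
  nil_not_mem : nil ∉ dom
  map_outside : ∀ f l, l ∉ dom → map f l = nil

variable {Loc F Var : Type} {nil : Loc}

/-- The restriction `h↾S`: the heaplet with domain `S ∩ dom h` and fields restricted
accordingly. -/
noncomputable def Heaplet.restrict (h : Heaplet Loc F nil) (S : Set Loc) :
    Heaplet Loc F nil where
  dom := S ∩ h.dom
  map := fun f l => if l ∈ S ∩ h.dom then h.map f l else nil
  nil_not_mem := fun hc => h.nil_not_mem hc.2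
  map_outside := fun f l hl => by simp [hl]

/-- `Agrees h' h S`: the heaplet `h'` agrees with `h` on the set `S`. -/
def Agrees (h' h : Heaplet Loc F nil) (S : Set Loc) : Prop :=
  S ⊆ h.dom ∧ S ⊆ h'.dom ∧ ∀ f : F, ∀ u ∈ S, h'.map f u = h.map f u

/-- `Subheaplet h' h`: `h'` is a subheaplet of `h`. -/
def Subheaplet (h' h : Heaplet Loc F nil) : Prop :=
  h'.dom ⊆ h.dom ∧ Agrees h h' h'.dom

/-- Formulas of the base SL-FL logic: heap-independent formulas, points-to atoms,
guarded existentials `∃y.(x ↦_f y : α)`, conditionals, conjunction, overlapping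
conjunction `∧∧`, disjunction, and separating conjunction `⋆`. -/
inductive Fml (Var F Loc : Type) : Type _ where
  | pure (δ : (Var → Loc) → Prop)
  | pointsTo (x : Var) (f : F) (y : Var)
  | exGuard (y x : Var) (f : F) (α : Fml Var F Loc)
  | ite (γ α β : Fml Var F Loc)
  | and (α β : Fml Var F Loc)
  | oand (α β : Fml Var F Loc)
  | or (α β : Fml Var F Loc)
  | star (α β : Fml Var F Loc)

/-- Union of two partial sets of locations (`none` plays the role of `⊥`). -/
def union2 : Option (Set Loc) → Option (Set Loc) → Option (Set Loc)
  | some a, some b => some (a ∪ b)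
  | _, _ => none

mutual
/-- The partial support `Supp(α, s, h)`; `none` is `⊥`. -/
noncomputable def Supp : Fml Var F Loc → (Var → Loc) → Heaplet Loc F nil → Option (Set Loc)
  | .pure _, _, _ => some (∅ : Set Loc)
  | .pointsTo x _ _, s, h => if s x ∈ h.dom then some {s x} else none
  | .exGuard y x f α, s, h =>
      if s x ∈ h.dom then
        match Supp α (Function.update s y (h.map f (s x))) h with
        | some S => some ({s x} ∪ S)
        | none => none
      else none
  | .ite γ α β, s, h =>
      match Supp γ s h with
      | none => none
      | some Sγ =>
        if Sat γ s (h.restrict Sγ) then (Supp α s h).map fun Sα => Sγ ∪ Sα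
        else (Supp β s h).map fun Sβ => Sγ ∪ Sβ
  | .and α β, s, h => union2 (Supp α s h) (Supp β s h)
  | .oand α β, s, h => union2 (Supp α s h) (Supp β s h)
  | .or α β, s, h => union2 (Supp α s h) (Supp β s h)
  | .star α β, s, h => union2 (Supp α s h) (Supp β s h)

/-- Satisfaction `(s, h) ⊨ α`. -/
noncomputable def Sat : Fml Var F Loc → (Var → Loc) → Heaplet Loc F nil → Prop
  | .pure δ, s, h => δ s ∧ h.dom = ∅
  | .pointsTo x f y, s, h => h.dom = {s x} ∧ h.map f (s x) = s y
  | .exGuard y x f α, s, h =>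
      s x ∈ h.dom ∧
        ∃ S, Supp α (Function.update s y (h.map f (s x))) h = some S ∧
          h.dom = {s x} ∪ S ∧
          Sat α (Function.update s y (h.map f (s x))) (h.restrict S)
  | .ite γ α β, s, h =>
      ∃ Sγ, Supp γ s h = some Sγ ∧
        ((Sat γ s (h.restrict Sγ) ∧
            ∃ Sα, Supp α s h = some Sα ∧ h.dom = Sγ ∪ Sα ∧ Sat α s (h.restrict Sα)) ∨
         (¬ Sat γ s (h.restrict Sγ) ∧
            ∃ Sβ, Supp β s h = some Sβ ∧ h.dom = Sγ ∪ Sβ ∧ Sat β s (h.restrict Sβ)))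
  | .and α β, s, h => Sat α s h ∧ Sat β s h
  | .oand α β, s, h =>
      ∃ Sα Sβ, Supp α s h = some Sα ∧ Supp β s h = some Sβ ∧
        h.dom = Sα ∪ Sβ ∧ Sat α s (h.restrict Sα) ∧ Sat β s (h.restrict Sβ)
  | .or α β, s, h =>
      ∃ Sα Sβ, Supp α s h = some Sα ∧ Supp β s h = some Sβ ∧
        h.dom = Sα ∪ Sβ ∧ (Sat α s (h.restrict Sα) ∨ Sat β s (h.restrict Sβ))
  | .star α β, s, h =>
      ∃ h₁ h₂ : Heaplet Loc F nil, Subheaplet h₁ h ∧ Subheaplet h₂ h ∧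
        Disjoint h₁.dom h₂.dom ∧ h.dom = h₁.dom ∪ h₂.dom ∧ Sat α s h₁ ∧ Sat β s h₂
end

theorem Heaplet.ext' {h₁ h₂ : Heaplet Loc F nil} (hd : h₁.dom = h₂.dom)
    (hm : ∀ f u, u ∈ h₁.dom → h₁.map f u = h₂.map f u) : h₁ = h₂ := by
  obtain ⟨d₁, m₁, n₁, o₁⟩ := h₁
  obtain ⟨d₂, m₂, n₂, o₂⟩ := h₂
  simp only at hd hm ⊢
  subst hd
  have hmm : m₁ = m₂ := by
    funext f u
    by_cases hu : u ∈ d₁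
    · exact hm f u hu
    · rw [o₁ f u hu, o₂ f u hu]
  subst hmm
  rfl

theorem supp_subset (α : Fml Var F Loc) :
    ∀ (s : Var → Loc) (h : Heaplet Loc F nil) (S : Set Loc),
      Supp (nil := nil) α s h = some S → S ⊆ h.dom := by
  induction α with
  | pure δ =>
    intro s h S hS
    simp only [Supp, Option.some.injEq] at hS
    subst hS; simp
  | pointsTo x f y =>
    intro s h S hS
    simp only [Supp] at hS
    split at hS
    · simp only [Option.some.injEq] at hS
      subst hS; simpa
    · exact absurd hS (by simp)
  | exGuard y x f α ih =>
    intro s h S hS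
    simp only [Supp] at hS
    split at hS
    · rename_i hx
      rcases hE : Supp (nil := nil) α (Function.update s y (h.map f (s x))) h with _ | S'
      · rw [hE] at hS; exact absurd hS (by simp)
      · rw [hE] at hS
        simp only [Option.some.injEq] at hS
        subst hS
        exact Set.union_subset (by simpa) (ih _ _ _ hE)
    · exact absurd hS (by simp)
  | ite γ α β ihγ ihα ihβ =>
    intro s h S hS
    simp only [Supp] at hS
    rcases hG : Supp (nil := nil) γ s h with _ | Sγ
    · rw [hG] at hS; exact absurd hS (by simp)
    · rw [hG] at hS
      simp only at hS
      split at hS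
      · rcases hA : Supp (nil := nil) α s h with _ | Sα
        · rw [hA] at hS; exact absurd hS (by simp)
        · rw [hA] at hS
          simp only [Option.map_some, Option.some.injEq] at hS
          subst hS
          exact Set.union_subset (ihγ _ _ _ hG) (ihα _ _ _ hA)
      · rcases hB : Supp (nil := nil) β s h with _ | Sβ
        · rw [hB] at hS; exact absurd hS (by simp)
        · rw [hB] at hS
          simp only [Option.map_some, Option.some.injEq] at hS
          subst hS
          exact Set.union_subset (ihγ _ _ _ hG) (ihβ _ _ _ hB)
  | and α β ihα ihβ =>
    intro s h S hS
    simp only [Supp] at hS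
    rcases hA : Supp (nil := nil) α s h with _ | Sα <;> rw [hA] at hS <;>
      rcases hB : Supp (nil := nil) β s h with _ | Sβ <;> rw [hB] at hS <;>
      simp only [union2, Option.some.injEq] at hS <;>
      try exact absurd hS (by simp)
    subst hS
    exact Set.union_subset (ihα _ _ _ hA) (ihβ _ _ _ hB)
  | oand α β ihα ihβ =>
    intro s h S hS
    simp only [Supp] at hS
    rcases hA : Supp (nil := nil) α s h with _ | Sα <;> rw [hA] at hS <;>
      rcases hB : Supp (nil := nil) β s h with _ | Sβ <;> rw [hB] at hS <;>
      simp only [union2, Option.some.injEq] at hS <;>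
      try exact absurd hS (by simp)
    subst hS
    exact Set.union_subset (ihα _ _ _ hA) (ihβ _ _ _ hB)
  | or α β ihα ihβ =>
    intro s h S hS
    simp only [Supp] at hS
    rcases hA : Supp (nil := nil) α s h with _ | Sα <;> rw [hA] at hS <;>
      rcases hB : Supp (nil := nil) β s h with _ | Sβ <;> rw [hB] at hS <;>
      simp only [union2, Option.some.injEq] at hS <;>
      try exact absurd hS (by simp)
    subst hS
    exact Set.union_subset (ihα _ _ _ hA) (ihβ _ _ _ hB)
  | star α β ihα ihβ =>
    intro s h S hS
    simp only [Supp] at hS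
    rcases hA : Supp (nil := nil) α s h with _ | Sα <;> rw [hA] at hS <;>
      rcases hB : Supp (nil := nil) β s h with _ | Sβ <;> rw [hB] at hS <;>
      simp only [union2, Option.some.injEq] at hS <;>
      try exact absurd hS (by simp)
    subst hS
    exact Set.union_subset (ihα _ _ _ hA) (ihβ _ _ _ hB)

theorem restrict_eq_of_agree (h h' : Heaplet Loc F nil) (T : Set Loc)
    (hT : T ⊆ h.dom) (hT' : T ⊆ h'.dom)
    (hag : ∀ f u, u ∈ T → h'.map f u = h.map f u) :
    h'.restrict T = h.restrict T := by
  refine Heaplet.ext' ?_ ?_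
  · show T ∩ h'.dom = T ∩ h.dom
    rw [Set.inter_eq_left.2 hT', Set.inter_eq_left.2 hT]
  · intro f u hu
    have h1 : u ∈ T ∩ h'.dom := hu
    have hu' : u ∈ T := h1.1
    have h2 : u ∈ T ∩ h.dom := ⟨hu', hT hu'⟩
    show (if u ∈ T ∩ h'.dom then h'.map f u else nil)
        = (if u ∈ T ∩ h.dom then h.map f u else nil)
    rw [if_pos h1, if_pos h2]
    exact hag f u hu'

theorem supp_agree (h h' : Heaplet Loc F nil) (α : Fml Var F Loc) :
    ∀ (s : Var → Loc) (S : Set Loc), Supp (nil := nil) α s h = some S →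
      S ⊆ h'.dom → (∀ f u, u ∈ S → h'.map f u = h.map f u) →
      Supp (nil := nil) α s h' = some S := by
  induction α with
  | pure δ =>
    intro s S hS _ _
    simpa [Supp] using hS
  | pointsTo x f y =>
    intro s S hS hsub hag
    simp only [Supp] at hS ⊢
    split at hS
    · simp only [Option.some.injEq] at hS
      subst hS
      rw [if_pos (hsub rfl)]
    · exact absurd hS (by simp)
  | exGuard y x f α ih =>
    intro s S hS hsub hag
    simp only [Supp] at hS ⊢
    split at hS
    · rename_i hx
      rcases hE : Supp (nil := nil) α (Function.update s y (h.map f (s x))) h with _ | S'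
      · rw [hE] at hS; exact absurd hS (by simp)
      · rw [hE] at hS
        simp only [Option.some.injEq] at hS
        subst hS
        have hxS : s x ∈ {s x} ∪ S' := Or.inl rfl
        have hmap : h'.map f (s x) = h.map f (s x) := hag f (s x) hxS
        have hE' : Supp (nil := nil) α (Function.update s y (h'.map f (s x))) h' = some S' := by
          rw [hmap]
          exact ih _ _ hE (fun u hu => hsub (Or.inr hu))
            (fun g u hu => hag g u (Or.inr hu))
        rw [if_pos (hsub hxS), hE']
    · exact absurd hS (by simp)
  | ite γ α β ihγ ihα ihβ =>
    intro s S hS hsub hag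
    simp only [Supp] at hS ⊢
    rcases hG : Supp (nil := nil) γ s h with _ | Sγ
    · rw [hG] at hS; exact absurd hS (by simp)
    rw [hG] at hS
    simp only at hS
    split at hS <;> rename_i hSat
    · rcases hA : Supp (nil := nil) α s h with _ | Sα
      · rw [hA] at hS; exact absurd hS (by simp)
      rw [hA] at hS
      simp only [Option.map_some, Option.some.injEq] at hS
      subst hS
      have hG' : Supp (nil := nil) γ s h' = some Sγ :=
        ihγ _ _ hG (fun u hu => hsub (Or.inl hu)) (fun g u hu => hag g u (Or.inl hu))
      have hreq : h'.restrict Sγ = h.restrict Sγ :=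
        restrict_eq_of_agree h h' Sγ (supp_subset γ s h Sγ hG)
          (fun u hu => hsub (Or.inl hu)) (fun g u hu => hag g u (Or.inl hu))
      have hA' : Supp (nil := nil) α s h' = some Sα :=
        ihα _ _ hA (fun u hu => hsub (Or.inr hu)) (fun g u hu => hag g u (Or.inr hu))
      rw [hG']
      simp only [hreq, if_pos hSat, hA', Option.map_some]
    · rcases hB : Supp (nil := nil) β s h with _ | Sβ
      · rw [hB] at hS; exact absurd hS (by simp)
      rw [hB] at hS
      simp only [Option.map_some, Option.some.injEq] at hS
      subst hS
      have hG' : Supp (nil := nil) γ s h' = some Sγ :=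
        ihγ _ _ hG (fun u hu => hsub (Or.inl hu)) (fun g u hu => hag g u (Or.inl hu))
      have hreq : h'.restrict Sγ = h.restrict Sγ :=
        restrict_eq_of_agree h h' Sγ (supp_subset γ s h Sγ hG)
          (fun u hu => hsub (Or.inl hu)) (fun g u hu => hag g u (Or.inl hu))
      have hB' : Supp (nil := nil) β s h' = some Sβ :=
        ihβ _ _ hB (fun u hu => hsub (Or.inr hu)) (fun g u hu => hag g u (Or.inr hu))
      rw [hG']
      simp only [hreq, if_neg hSat, hB', Option.map_some]
  | and α β ihα ihβ =>
    intro s S hS hsub hag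
    simp only [Supp] at hS ⊢
    rcases hA : Supp (nil := nil) α s h with _ | Sα <;> rw [hA] at hS <;>
      rcases hB : Supp (nil := nil) β s h with _ | Sβ <;> rw [hB] at hS <;>
      simp only [union2, Option.some.injEq] at hS <;>
      try exact absurd hS (by simp)
    subst hS
    rw [ihα _ _ hA (fun u hu => hsub (Or.inl hu)) (fun g u hu => hag g u (Or.inl hu)),
      ihβ _ _ hB (fun u hu => hsub (Or.inr hu)) (fun g u hu => hag g u (Or.inr hu))]
    rfl
  | oand α β ihα ihβ =>
    intro s S hS hsub hag
    simp only [Supp] at hS ⊢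
    rcases hA : Supp (nil := nil) α s h with _ | Sα <;> rw [hA] at hS <;>
      rcases hB : Supp (nil := nil) β s h with _ | Sβ <;> rw [hB] at hS <;>
      simp only [union2, Option.some.injEq] at hS <;>
      try exact absurd hS (by simp)
    subst hS
    rw [ihα _ _ hA (fun u hu => hsub (Or.inl hu)) (fun g u hu => hag g u (Or.inl hu)),
      ihβ _ _ hB (fun u hu => hsub (Or.inr hu)) (fun g u hu => hag g u (Or.inr hu))]
    rfl
  | or α β ihα ihβ =>
    intro s S hS hsub hag
    simp only [Supp] at hS ⊢
    rcases hA : Supp (nil := nil) α s h with _ | Sα <;> rw [hA] at hS <;>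
      rcases hB : Supp (nil := nil) β s h with _ | Sβ <;> rw [hB] at hS <;>
      simp only [union2, Option.some.injEq] at hS <;>
      try exact absurd hS (by simp)
    subst hS
    rw [ihα _ _ hA (fun u hu => hsub (Or.inl hu)) (fun g u hu => hag g u (Or.inl hu)),
      ihβ _ _ hB (fun u hu => hsub (Or.inr hu)) (fun g u hu => hag g u (Or.inr hu))]
    rfl
  | star α β ihα ihβ =>
    intro s S hS hsub hag
    simp only [Supp] at hS ⊢
    rcases hA : Supp (nil := nil) α s h with _ | Sα <;> rw [hA] at hS <;>
      rcases hB : Supp (nil := nil) β s h with _ | Sβ <;> rw [hB] at hS <;>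
      simp only [union2, Option.some.injEq] at hS <;>
      try exact absurd hS (by simp)
    subst hS
    rw [ihα _ _ hA (fun u hu => hsub (Or.inl hu)) (fun g u hu => hag g u (Or.inl hu)),
      ihβ _ _ hB (fun u hu => hsub (Or.inr hu)) (fun g u hu => hag g u (Or.inr hu))]
    rfl

end SLFL

open SLFL in
/-- For every base SL-FL formula `α`, store `s`, and heaplet `h`:
if `S = Supp(α, s, h) ≠ ⊥`, then `Supp(α, s, h↾S) = S`. -/
theorem supp_restrict {Loc F Var : Type} {nil : Loc}
    (α : Fml Var F Loc) (s : Var → Loc) (h : Heaplet Loc F nil) (S : Set Loc)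
    (hS : Supp (nil := nil) α s h = some S) :
    Supp (nil := nil) α s (h.restrict S) = some S := by
  have hsub : S ⊆ h.dom := supp_subset α s h S hS
  refine supp_agree h (h.restrict S) α s S hS
    (fun u hu => ⟨hu, hsub hu⟩) (fun f u hu => ?_)
  simp [Heaplet.restrict, hu, hsub hu]
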